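/- Let A ∈ ℝ^{n×n} have the unique LU factorization A = LU and let ΔA ∈ ℝ^{n×n}. If ‖Y_L‖₂ · ‖Y_U‖₂ · ‖ΔA‖_F < 1/4, then A + ΔA has a unique LU factorization A + ΔA = (L + ΔL)(U + ΔU) with ΔL strictly lower triangular and ΔU upper triangular, and moreover ‖ΔL‖_F ≤ 2‖Y_L‖₂‖ΔA‖_F / (1 + √(1 − 4‖Y_U‖₂‖Y_L‖₂‖ΔA‖_F)) ≤ 2‖Y_L‖₂‖ΔA‖_F. -/

import Mathlib

open Matrix Kronecker

noncomputable section

/-- Frobenius norm of a real matrix. -/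
noncomputable def frob {m k : Type*} [Fintype m] [Fintype k] (A : Matrix m k ℝ) : ℝ :=
  Real.sqrt (∑ i, ∑ j, (A i j) ^ 2)

/-- Euclidean norm of a vector. -/
noncomputable def vnorm {m : Type*} [Fintype m] (v : m → ℝ) : ℝ :=
  Real.sqrt (∑ i, (v i) ^ 2)

/-- Spectral norm (ℓ²-operator norm) of a real matrix. -/
noncomputable def spec {m k : Type*} [Fintype m] [Fintype k] [DecidableEq k]
    (A : Matrix m k ℝ) : ℝ :=
  ‖LinearMap.toContinuousLinearMap (Matrix.toEuclideanLin A)‖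

/-- Entrywise absolute value of a matrix. -/
def eabs {m k : Type*} (A : Matrix m k ℝ) : Matrix m k ℝ :=
  Matrix.of fun i j => |A i j|

/-- Column-stacking operator: `vec X` indexed by (column, row). -/
def vec {n : ℕ} (X : Matrix (Fin n) (Fin n) ℝ) : Fin n × Fin n → ℝ :=
  fun p => X p.2 p.1

/-- Upper triangular part of a matrix. -/
def ut {n : ℕ} (X : Matrix (Fin n) (Fin n) ℝ) : Matrix (Fin n) (Fin n) ℝ :=
  Matrix.of fun i j => if i ≤ j then X i j else 0

/-- Strictly lower triangular part of a matrix. -/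
def slt {n : ℕ} (X : Matrix (Fin n) (Fin n) ℝ) : Matrix (Fin n) (Fin n) ℝ :=
  Matrix.of fun i j => if j < i then X i j else 0

/-- Upper triangular part with diagonal halved. -/
def up {n : ℕ} (X : Matrix (Fin n) (Fin n) ℝ) : Matrix (Fin n) (Fin n) ℝ :=
  Matrix.of fun i j => if i = j then X i j / 2 else if i ≤ j then X i j else 0

/-- `M_ut`: diagonal matrix with `vec (ut X) = (Mut n).mulVec (vec X)`. -/
def Mut (n : ℕ) : Matrix (Fin n × Fin n) (Fin n × Fin n) ℝ :=
  Matrix.diagonal fun p => if p.2 ≤ p.1 then 1 else 0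

/-- `M_slt`: diagonal matrix with `vec (slt X) = (Mslt n).mulVec (vec X)`. -/
def Mslt (n : ℕ) : Matrix (Fin n × Fin n) (Fin n × Fin n) ℝ :=
  Matrix.diagonal fun p => if p.1 < p.2 then 1 else 0

/-- `M_up`: diagonal matrix with `vec (up X) = (Mup n).mulVec (vec X)`. -/
def Mup (n : ℕ) : Matrix (Fin n × Fin n) (Fin n × Fin n) ℝ :=
  Matrix.diagonal fun p => if p.2 = p.1 then (1 : ℝ) / 2 else if p.2 < p.1 then 1 else 0

/-- `M_uvec`: 0–1 row-selection matrix extracting entries on or above the diagonal. -/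
def Muvec (n : ℕ) : Matrix {p : Fin n × Fin n // p.2 ≤ p.1} (Fin n × Fin n) ℝ :=
  Matrix.of fun q p => if (q : Fin n × Fin n) = p then 1 else 0

/-- `M_slvec`: 0–1 row-selection matrix extracting entries strictly below the diagonal. -/
def Mslvec (n : ℕ) : Matrix {p : Fin n × Fin n // p.1 < p.2} (Fin n × Fin n) ℝ :=
  Matrix.of fun q p => if (q : Fin n × Fin n) = p then 1 else 0

/-- The vec-permutation matrix `Π_{nn}` with `(vecPerm n).mulVec (vec X) = vec Xᵀ`. -/
def vecPerm (n : ℕ) : Matrix (Fin n × Fin n) (Fin n × Fin n) ℝ :=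
  Matrix.of fun p q => if p.1 = q.2 ∧ p.2 = q.1 then 1 else 0

def IsUnitLowerTri {n : ℕ} (L : Matrix (Fin n) (Fin n) ℝ) : Prop :=
  (∀ i, L i i = 1) ∧ ∀ i j : Fin n, i < j → L i j = 0

def IsLowerTri {n : ℕ} (L : Matrix (Fin n) (Fin n) ℝ) : Prop :=
  ∀ i j : Fin n, i < j → L i j = 0

def IsUpperTri {n : ℕ} (U : Matrix (Fin n) (Fin n) ℝ) : Prop :=
  ∀ i j : Fin n, j < i → U i j = 0

def IsStrictLowerTri {n : ℕ} (X : Matrix (Fin n) (Fin n) ℝ) : Prop :=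
  ∀ i j : Fin n, i ≤ j → X i j = 0

/-- Leading (n−1)×(n−1) principal submatrix. -/
def lead {n : ℕ} (U : Matrix (Fin n) (Fin n) ℝ) : Matrix (Fin (n - 1)) (Fin (n - 1)) ℝ :=
  Matrix.of fun i j => U (Fin.castLE (Nat.sub_le n 1) i) (Fin.castLE (Nat.sub_le n 1) j)

/-- `pad B` is the n×n matrix with B as leading (n−1)×(n−1) block and zeros elsewhere. -/
def pad {n : ℕ} (B : Matrix (Fin (n - 1)) (Fin (n - 1)) ℝ) : Matrix (Fin n) (Fin n) ℝ :=
  Matrix.of fun i j =>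
    if h1 : (i : ℕ) < n - 1 then
      if h2 : (j : ℕ) < n - 1 then B ⟨i, h1⟩ ⟨j, h2⟩ else 0
    else 0

/-- `Y_L = M_slvec (I_n ⊗ L) M_slt (diag(U_{n−1}^{−T}, 0) ⊗ L^{−1})`. -/
noncomputable def YL {n : ℕ} (L U : Matrix (Fin n) (Fin n) ℝ) :
    Matrix {p : Fin n × Fin n // p.1 < p.2} (Fin n × Fin n) ℝ :=
  Mslvec n * ((1 : Matrix (Fin n) (Fin n) ℝ) ⊗ₖ L) * Mslt n *
    (pad (((lead U)⁻¹)ᵀ) ⊗ₖ L⁻¹)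

/-- `Y_U = M_uvec (Uᵀ ⊗ I_n) M_ut (U^{−T} ⊗ L^{−1})`. -/
noncomputable def YU {n : ℕ} (L U : Matrix (Fin n) (Fin n) ℝ) :
    Matrix {p : Fin n × Fin n // p.2 ≤ p.1} (Fin n × Fin n) ℝ :=
  Muvec n * (Uᵀ ⊗ₖ (1 : Matrix (Fin n) (Fin n) ℝ)) * Mut n * ((U⁻¹)ᵀ ⊗ₖ L⁻¹)

/-- `G_R = M_uvec (Rᵀ ⊗ I_n) M_up [R^{−T} ⊗ I_n + (I_n ⊗ R^{−T}) Π_{nn}]`. -/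
noncomputable def GR {n : ℕ} (R : Matrix (Fin n) (Fin n) ℝ) :
    Matrix {p : Fin n × Fin n // p.2 ≤ p.1} (Fin n × Fin n) ℝ :=
  Muvec n * (Rᵀ ⊗ₖ (1 : Matrix (Fin n) (Fin n) ℝ)) * Mup n *
    ((R⁻¹)ᵀ ⊗ₖ (1 : Matrix (Fin n) (Fin n) ℝ) +
      ((1 : Matrix (Fin n) (Fin n) ℝ) ⊗ₖ (R⁻¹)ᵀ) * vecPerm n)

/-- `H_R = M_uvec (Rᵀ ⊗ I_n) M_up (R^{−T} ⊗ R^{−T})`. -/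
noncomputable def HR {n : ℕ} (R : Matrix (Fin n) (Fin n) ℝ) :
    Matrix {p : Fin n × Fin n // p.2 ≤ p.1} (Fin n × Fin n) ℝ :=
  Muvec n * (Rᵀ ⊗ₖ (1 : Matrix (Fin n) (Fin n) ℝ)) * Mup n * ((R⁻¹)ᵀ ⊗ₖ (R⁻¹)ᵀ)


section NormLemmas

attribute [local instance] Matrix.frobeniusSeminormedAddCommGroup
  Matrix.frobeniusNormedAddCommGroup Matrix.frobeniusNormedSpace Matrix.frobeniusNormedRing

variable {m k : Type*} [Fintype m] [Fintype k]

lemma frob_nonneg (A : Matrix m k ℝ) : 0 ≤ frob A := Real.sqrt_nonneg _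

lemma vnorm_nonneg (v : m → ℝ) : 0 ≤ vnorm v := Real.sqrt_nonneg _

lemma spec_nonneg [DecidableEq k] (A : Matrix m k ℝ) : 0 ≤ spec A := norm_nonneg _

lemma frob_eq_norm (A : Matrix m k ℝ) : frob A = ‖A‖ := by
  rw [Matrix.frobenius_norm_def, frob]
  rw [Real.sqrt_eq_rpow]
  congr 1
  apply Finset.sum_congr rfl; intro i _
  apply Finset.sum_congr rfl; intro j _
  rw [show ((2:ℝ)) = ((2:ℕ):ℝ) by norm_num, Real.rpow_natCast, Real.norm_eq_abs, sq_abs]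

lemma vnorm_eq_norm (v : m → ℝ) : vnorm v = ‖(WithLp.equiv 2 (m → ℝ)).symm v‖ := by
  rw [EuclideanSpace.norm_eq, vnorm]
  congr 1
  apply Finset.sum_congr rfl; intro i _
  rw [WithLp.equiv_symm_apply, WithLp.ofLp_toLp, Real.norm_eq_abs, sq_abs]

lemma vnorm_mulVec_le [DecidableEq k] (A : Matrix m k ℝ) (v : k → ℝ) :
    vnorm (A.mulVec v) ≤ spec A * vnorm v := by
  rw [vnorm_eq_norm, vnorm_eq_norm]
  exact (LinearMap.toContinuousLinearMap (Matrix.toEuclideanLin A)).le_opNorm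
    ((WithLp.equiv 2 (k → ℝ)).symm v)

end NormLemmas

section VecLemmas

variable {n : ℕ}

lemma frob_eq_vnorm_vec (X : Matrix (Fin n) (Fin n) ℝ) : frob X = vnorm (_root_.vec X) := by
  rw [frob, vnorm, Fintype.sum_prod_type, Finset.sum_comm]
  rfl

lemma mulVec_Mslvec (w : Fin n × Fin n → ℝ) (q : {p : Fin n × Fin n // p.1 < p.2}) :
    ((Mslvec n).mulVec w) q = w q.val := by
  simp [Mslvec, Matrix.mulVec, dotProduct, ite_mul]

lemma mulVec_Muvec (w : Fin n × Fin n → ℝ) (q : {p : Fin n × Fin n // p.2 ≤ p.1}) :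
    ((Muvec n).mulVec w) q = w q.val := by
  simp [Muvec, Matrix.mulVec, dotProduct, ite_mul]

lemma vnorm_Mslvec_of_strictLower {X : Matrix (Fin n) (Fin n) ℝ} (hX : IsStrictLowerTri X) :
    vnorm ((Mslvec n).mulVec (_root_.vec X)) = frob X := by
  rw [frob_eq_vnorm_vec, vnorm, vnorm]
  congr 1
  have h1 : ∑ q : {p : Fin n × Fin n // p.1 < p.2}, (((Mslvec n).mulVec (_root_.vec X)) q) ^ 2
      = ∑ q : {p : Fin n × Fin n // p.1 < p.2}, (_root_.vec X q.val) ^ 2 := by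
    apply Finset.sum_congr rfl; intro q _; rw [mulVec_Mslvec]
  rw [h1, ← Finset.sum_subtype (Finset.univ.filter (fun p : Fin n × Fin n => p.1 < p.2))
    (by simp) (fun p => (_root_.vec X p) ^ 2)]
  apply Finset.sum_subset (Finset.filter_subset _ _)
  intro p _ hp
  simp only [Finset.mem_filter, Finset.mem_univ, true_and] at hp
  have : X p.2 p.1 = 0 := hX p.2 p.1 (not_lt.mp hp)
  simp [_root_.vec, this]

lemma vnorm_Muvec_of_upper {X : Matrix (Fin n) (Fin n) ℝ} (hX : IsUpperTri X) :
    vnorm ((Muvec n).mulVec (_root_.vec X)) = frob X := by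
  rw [frob_eq_vnorm_vec, vnorm, vnorm]
  congr 1
  have h1 : ∑ q : {p : Fin n × Fin n // p.2 ≤ p.1}, (((Muvec n).mulVec (_root_.vec X)) q) ^ 2
      = ∑ q : {p : Fin n × Fin n // p.2 ≤ p.1}, (_root_.vec X q.val) ^ 2 := by
    apply Finset.sum_congr rfl; intro q _; rw [mulVec_Muvec]
  rw [h1, ← Finset.sum_subtype (Finset.univ.filter (fun p : Fin n × Fin n => p.2 ≤ p.1))
    (by simp) (fun p => (_root_.vec X p) ^ 2)]
  apply Finset.sum_subset (Finset.filter_subset _ _)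
  intro p _ hp
  simp only [Finset.mem_filter, Finset.mem_univ, true_and] at hp
  have : X p.2 p.1 = 0 := hX p.2 p.1 (not_le.mp hp)
  simp [_root_.vec, this]

lemma kron_mulVec (A C X : Matrix (Fin n) (Fin n) ℝ) :
    (Cᵀ ⊗ₖ A).mulVec (_root_.vec X) = _root_.vec (A * X * C) := by
  funext p
  obtain ⟨c, r⟩ := p
  simp only [Matrix.mulVec, dotProduct, Fintype.sum_prod_type,
    Matrix.kroneckerMap_apply, Matrix.transpose_apply, _root_.vec, Matrix.mul_apply,
    Finset.sum_mul, Finset.mul_sum]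
  apply Finset.sum_congr rfl; intro l _
  apply Finset.sum_congr rfl; intro k _
  ring

lemma Mslt_mulVec (X : Matrix (Fin n) (Fin n) ℝ) :
    (Mslt n).mulVec (_root_.vec X) = _root_.vec (slt X) := by
  funext p
  rw [Mslt, Matrix.mulVec_diagonal]
  simp only [_root_.vec, slt, Matrix.of_apply]
  by_cases h : p.1 < p.2 <;> simp [h]

lemma Mut_mulVec (X : Matrix (Fin n) (Fin n) ℝ) :
    (Mut n).mulVec (_root_.vec X) = _root_.vec (ut X) := by
  funext p
  rw [Mut, Matrix.mulVec_diagonal]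
  simp only [_root_.vec, ut, Matrix.of_apply]
  by_cases h : p.2 ≤ p.1 <;> simp [h]

end VecLemmas

section TriLemmas

variable {n : ℕ}

lemma slt_add_ut (X : Matrix (Fin n) (Fin n) ℝ) : slt X + ut X = X := by
  ext i j
  simp only [Matrix.add_apply, slt, ut, Matrix.of_apply]
  rcases lt_or_ge j i with h | h
  · rw [if_pos h, if_neg (not_le.mpr h), add_zero]
  · rw [if_neg (not_lt.mpr h), if_pos h, zero_add]

lemma isStrictLower_slt (X : Matrix (Fin n) (Fin n) ℝ) : IsStrictLowerTri (slt X) := by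
  intro i j hij
  simp only [slt, Matrix.of_apply, if_neg (not_lt.mpr hij)]

lemma isUpper_ut (X : Matrix (Fin n) (Fin n) ℝ) : IsUpperTri (ut X) := by
  intro i j hij
  simp only [ut, Matrix.of_apply, if_neg (not_le.mpr hij)]

lemma slt_sub (X Y : Matrix (Fin n) (Fin n) ℝ) : slt X - slt Y = slt (X - Y) := by
  ext i j
  simp only [Matrix.sub_apply, slt, Matrix.of_apply]
  by_cases h : j < i <;> simp [h]

lemma ut_sub (X Y : Matrix (Fin n) (Fin n) ℝ) : ut X - ut Y = ut (X - Y) := by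
  ext i j
  simp only [Matrix.sub_apply, ut, Matrix.of_apply]
  by_cases h : i ≤ j <;> simp [h]

lemma lower_mul_strictLower {L S : Matrix (Fin n) (Fin n) ℝ} (hL : IsLowerTri L)
    (hS : IsStrictLowerTri S) : IsStrictLowerTri (L * S) := by
  intro i j hij
  rw [Matrix.mul_apply]
  apply Finset.sum_eq_zero
  intro k _
  rcases le_or_gt k i with hk | hk
  · rw [hS k j (hk.trans hij), mul_zero]
  · rw [hL i k hk, zero_mul]

lemma upper_mul_upper {A B : Matrix (Fin n) (Fin n) ℝ} (hA : IsUpperTri A)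
    (hB : IsUpperTri B) : IsUpperTri (A * B) := by
  intro i j hij
  rw [Matrix.mul_apply]
  apply Finset.sum_eq_zero
  intro k _
  rcases le_or_gt i k with hk | hk
  · rw [hB k j (hij.trans_le hk), mul_zero]
  · rw [hA i k hk, zero_mul]

lemma unitLower_mul_unitLower {A B : Matrix (Fin n) (Fin n) ℝ} (hA : IsUnitLowerTri A)
    (hB : IsUnitLowerTri B) : IsUnitLowerTri (A * B) := by
  constructor
  · intro i
    rw [Matrix.mul_apply]
    rw [Finset.sum_eq_single i (fun k _ hk => ?_) (by simp)]
    · rw [hA.1, hB.1, one_mul]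
    · rcases lt_or_gt_of_ne hk with h | h
      · rw [hB.2 k i h, mul_zero]
      · rw [hA.2 i k h, zero_mul]
  · intro i j hij
    rw [Matrix.mul_apply]
    apply Finset.sum_eq_zero
    intro k _
    rcases le_or_gt k i with hk | hk
    · rw [hB.2 k j (hk.trans_lt hij), mul_zero]
    · rw [hA.2 i k hk, zero_mul]

lemma IsUnitLowerTri.det_eq_one {L : Matrix (Fin n) (Fin n) ℝ} (hL : IsUnitLowerTri L) :
    L.det = 1 := by
  rw [Matrix.det_of_lowerTriangular L (fun i j h => hL.2 i j h)]
  exact Finset.prod_eq_one (fun i _ => hL.1 i)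

lemma IsUnitLowerTri.isUnitDet {L : Matrix (Fin n) (Fin n) ℝ} (hL : IsUnitLowerTri L) :
    IsUnit L.det := by rw [hL.det_eq_one]; exact isUnit_one

lemma IsUnitLowerTri.inv {L : Matrix (Fin n) (Fin n) ℝ} (hL : IsUnitLowerTri L) :
    IsUnitLowerTri L⁻¹ := by
  letI := L.invertibleOfIsUnitDet hL.isUnitDet
  have hlow : ∀ i j : Fin n, i < j → L⁻¹ i j = 0 := by
    have := Matrix.blockTriangular_inv_of_blockTriangular
      (M := L) (b := OrderDual.toDual) (fun i j h => hL.2 i j h)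
    intro i j h
    exact this h
  refine ⟨fun i => ?_, hlow⟩
  have h1 : (L * L⁻¹) i i = 1 := by rw [Matrix.mul_nonsing_inv L hL.isUnitDet, Matrix.one_apply_eq]
  rw [Matrix.mul_apply, Finset.sum_eq_single i (fun k _ hk => ?_) (by simp)] at h1
  · rw [hL.1 i, one_mul] at h1; exact h1
  · rcases lt_or_gt_of_ne hk with h | h
    · rw [hlow k i h, mul_zero]
    · rw [hL.2 i k h, zero_mul]

lemma IsUpperTri.inv {U : Matrix (Fin n) (Fin n) ℝ} (hU : IsUpperTri U)
    (hUdet : IsUnit U.det) : IsUpperTri U⁻¹ := by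
  letI := U.invertibleOfIsUnitDet hUdet
  have := Matrix.blockTriangular_inv_of_blockTriangular
    (M := U) (b := id) (fun i j h => hU i j h)
  intro i j h
  exact this h

lemma upper_det_eq_prod {U : Matrix (Fin n) (Fin n) ℝ} (hU : IsUpperTri U) :
    U.det = ∏ i, U i i :=
  Matrix.det_of_upperTriangular (fun i j h => hU i j h)

lemma upper_diag_ne_zero {U : Matrix (Fin n) (Fin n) ℝ} (hU : IsUpperTri U)
    (hUdet : IsUnit U.det) (i : Fin n) : U i i ≠ 0 := by
  rw [upper_det_eq_prod hU] at hUdet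
  have := hUdet.ne_zero
  intro h
  exact this (Finset.prod_eq_zero (Finset.mem_univ i) h)

lemma upper_inv_diag {U : Matrix (Fin n) (Fin n) ℝ} (hU : IsUpperTri U)
    (hUdet : IsUnit U.det) (i : Fin n) : U⁻¹ i i * U i i = 1 := by
  have hUinv := hU.inv hUdet
  have h1 : (U⁻¹ * U) i i = 1 := by rw [Matrix.nonsing_inv_mul U hUdet, Matrix.one_apply_eq]
  rw [Matrix.mul_apply, Finset.sum_eq_single i (fun k _ hk => ?_) (by simp)] at h1
  · exact h1
  · rcases lt_or_gt_of_ne hk with h | h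
    · rw [hUinv i k h, zero_mul]
    · rw [hU k i h, mul_zero]

end TriLemmas

section LeadPad

variable {n : ℕ}

lemma sum_fin_pred {f : Fin n → ℝ} (hf : ∀ k : Fin n, ¬ ((k:ℕ) < n - 1) → f k = 0)
    (g : Fin (n-1) → ℝ) (hg : ∀ k : Fin (n-1), g k = f (Fin.castLE (Nat.sub_le n 1) k)) :
    ∑ k : Fin (n-1), g k = ∑ k : Fin n, f k := by
  have h1 : ∑ k : Fin n, f k
      = ∑ k ∈ Finset.univ.filter (fun k : Fin n => (k:ℕ) < n - 1), f k := by
    symm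
    apply Finset.sum_subset (Finset.filter_subset _ _)
    intro k _ hk
    simp only [Finset.mem_filter, Finset.mem_univ, true_and] at hk
    exact hf k hk
  rw [h1]
  apply Finset.sum_bij' (i := fun (a : Fin (n-1)) (_ : a ∈ Finset.univ) =>
      Fin.castLE (Nat.sub_le n 1) a)
    (j := fun (b : Fin n) (hb : b ∈ Finset.univ.filter (fun k : Fin n => (k:ℕ) < n - 1)) =>
      (⟨b.val, by simpa using hb⟩ : Fin (n-1)))
  case hi =>
    intro a _
    simp only [Finset.mem_filter, Finset.mem_univ, true_and, Fin.coe_castLE]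
    exact a.isLt
  case hj => intro b _; simp
  case left_neg => intro a _; simp [Fin.ext_iff]
  case right_neg => intro b _; simp [Fin.ext_iff]
  case h => intro a _; exact hg a

lemma lead_inv {U : Matrix (Fin n) (Fin n) ℝ} (hU : IsUpperTri U) (hUdet : IsUnit U.det) :
    (lead U)⁻¹ = lead (U⁻¹) := by
  apply Matrix.inv_eq_right_inv
  have hUinv := hU.inv hUdet
  ext i j
  rw [Matrix.mul_apply]
  have key : ∑ k : Fin (n-1), lead U i k * lead (U⁻¹) k j
      = ∑ k : Fin n, U (Fin.castLE (Nat.sub_le n 1) i) k * U⁻¹ k (Fin.castLE (Nat.sub_le n 1) j) := by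
    apply sum_fin_pred
    · intro k hk
      have hjk : (Fin.castLE (Nat.sub_le n 1) j : Fin n) < k := by
        rw [Fin.lt_def]
        simp only [Fin.coe_castLE]
        omega
      rw [hUinv k _ hjk, mul_zero]
    · intro k; rfl
  rw [key, ← Matrix.mul_apply, Matrix.mul_nonsing_inv U hUdet]
  rw [Matrix.one_apply, Matrix.one_apply]
  congr 1
  simp [Fin.ext_iff]

lemma slt_mul_pad_lead {R : Matrix (Fin n) (Fin n) ℝ} (hR : IsUpperTri R)
    (X : Matrix (Fin n) (Fin n) ℝ) : slt (X * pad (lead R)) = slt (X * R) := by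
  ext i j
  simp only [slt, Matrix.of_apply]
  by_cases h : j < i
  · rw [if_pos h, if_pos h, Matrix.mul_apply, Matrix.mul_apply]
    apply Finset.sum_congr rfl
    intro l _
    congr 1
    have hj : (j : ℕ) < n - 1 := by
      have := i.isLt
      have := Fin.lt_def.mp h
      omega
    by_cases hl : (l : ℕ) < n - 1
    · simp only [pad, lead, Matrix.of_apply, dif_pos hl, dif_pos hj]
      congr 1 <;> simp [Fin.ext_iff]
    · simp only [pad, Matrix.of_apply, dif_neg hl]
      rw [hR l j (by rw [Fin.lt_def]; omega)]
  · rw [if_neg h, if_neg h]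

lemma pad_transpose (B : Matrix (Fin (n-1)) (Fin (n-1)) ℝ) : (pad B)ᵀ = pad Bᵀ := by
  ext i j
  simp only [Matrix.transpose_apply, pad, Matrix.of_apply]
  by_cases h1 : (i : ℕ) < n - 1 <;> by_cases h2 : (j : ℕ) < n - 1 <;>
    simp [h1, h2, Matrix.transpose_apply]

end LeadPad

section OperatorIdentities

variable {n : ℕ} {L U : Matrix (Fin n) (Fin n) ℝ}

lemma YL_mulVec (hL : IsUnitLowerTri L) (hU : IsUpperTri U) (hUdet : IsUnit U.det)
    (M : Matrix (Fin n) (Fin n) ℝ) :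
    (YL L U).mulVec (_root_.vec M) = (Mslvec n).mulVec (_root_.vec (L * slt (L⁻¹ * M * U⁻¹))) := by
  have h1 : pad (((lead U)⁻¹)ᵀ) = (pad ((lead U)⁻¹))ᵀ := by rw [pad_transpose]
  rw [YL, h1, ← Matrix.mulVec_mulVec, ← Matrix.mulVec_mulVec, ← Matrix.mulVec_mulVec,
    kron_mulVec, Mslt_mulVec]
  have h2 : slt (L⁻¹ * M * pad ((lead U)⁻¹)) = slt (L⁻¹ * M * U⁻¹) := by
    rw [lead_inv hU hUdet, slt_mul_pad_lead (hU.inv hUdet)]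
  rw [h2]
  have h3 : ((1 : Matrix (Fin n) (Fin n) ℝ) ⊗ₖ L).mulVec (_root_.vec (slt (L⁻¹ * M * U⁻¹)))
      = _root_.vec (L * slt (L⁻¹ * M * U⁻¹)) := by
    have := kron_mulVec L 1 (slt (L⁻¹ * M * U⁻¹))
    rw [Matrix.transpose_one] at this
    rw [this, Matrix.mul_one]
  rw [h3]

lemma YU_mulVec (hL : IsUnitLowerTri L) (hU : IsUpperTri U) (hUdet : IsUnit U.det)
    (M : Matrix (Fin n) (Fin n) ℝ) :
    (YU L U).mulVec (_root_.vec M) = (Muvec n).mulVec (_root_.vec (ut (L⁻¹ * M * U⁻¹) * U)) := by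
  rw [YU, ← Matrix.mulVec_mulVec, ← Matrix.mulVec_mulVec, ← Matrix.mulVec_mulVec,
    kron_mulVec, Mut_mulVec]
  have h3 : (Uᵀ ⊗ₖ (1 : Matrix (Fin n) (Fin n) ℝ)).mulVec (_root_.vec (ut (L⁻¹ * M * U⁻¹)))
      = _root_.vec (ut (L⁻¹ * M * U⁻¹) * U) := by
    have := kron_mulVec (1 : Matrix (Fin n) (Fin n) ℝ) U (ut (L⁻¹ * M * U⁻¹))
    rw [this, Matrix.one_mul]
  rw [h3]

lemma TL_bound (hL : IsUnitLowerTri L) (hU : IsUpperTri U) (hUdet : IsUnit U.det)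
    (M : Matrix (Fin n) (Fin n) ℝ) :
    frob (L * slt (L⁻¹ * M * U⁻¹)) ≤ spec (YL L U) * frob M := by
  have hstrict : IsStrictLowerTri (L * slt (L⁻¹ * M * U⁻¹)) :=
    lower_mul_strictLower hL.2 (isStrictLower_slt _)
  rw [← vnorm_Mslvec_of_strictLower hstrict, ← YL_mulVec hL hU hUdet, frob_eq_vnorm_vec]
  exact vnorm_mulVec_le _ _

lemma TU_bound (hL : IsUnitLowerTri L) (hU : IsUpperTri U) (hUdet : IsUnit U.det)
    (M : Matrix (Fin n) (Fin n) ℝ) :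
    frob (ut (L⁻¹ * M * U⁻¹) * U) ≤ spec (YU L U) * frob M := by
  have hup : IsUpperTri (ut (L⁻¹ * M * U⁻¹) * U) := upper_mul_upper (isUpper_ut _) hU
  rw [← vnorm_Muvec_of_upper hup, ← YU_mulVec hL hU hUdet, frob_eq_vnorm_vec]
  exact vnorm_mulVec_le _ _

end OperatorIdentities

section CS

variable {m k : Type*} [Fintype m] [Fintype k]

lemma sq_vnorm (v : m → ℝ) : vnorm v ^ 2 = ∑ i, v i ^ 2 :=
  Real.sq_sqrt (Finset.sum_nonneg fun _ _ => sq_nonneg _)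

lemma coord_le_vnorm (v : m → ℝ) (i : m) : |v i| ≤ vnorm v := by
  rw [vnorm, ← Real.sqrt_sq_eq_abs]
  exact Real.sqrt_le_sqrt (Finset.single_le_sum (f := fun j => v j ^ 2)
    (fun _ _ => sq_nonneg _) (Finset.mem_univ i))

lemma entry_le_frob (X : Matrix m k ℝ) (i : m) (j : k) : |X i j| ≤ frob X := by
  rw [frob, ← Real.sqrt_sq_eq_abs]
  apply Real.sqrt_le_sqrt
  calc X i j ^ 2 ≤ ∑ j', X i j' ^ 2 :=
        Finset.single_le_sum (f := fun j' => X i j' ^ 2) (fun _ _ => sq_nonneg _)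
          (Finset.mem_univ j)
    _ ≤ ∑ i', ∑ j', X i' j' ^ 2 :=
        Finset.single_le_sum (f := fun i' => ∑ j', X i' j' ^ 2)
          (fun _ _ => Finset.sum_nonneg fun _ _ => sq_nonneg _) (Finset.mem_univ i)

lemma abs_dot_le (x y : m → ℝ) : |∑ i, x i * y i| ≤ vnorm x * vnorm y := by
  have h1 : |∑ i, x i * y i| ≤ ∑ i, |x i| * |y i| := by
    refine (Finset.abs_sum_le_sum_abs _ _).trans ?_
    apply Finset.sum_le_sum
    intro i _
    rw [abs_mul]
  refine h1.trans ?_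
  have h2 : (∑ i, |x i| * |y i|) ^ 2 ≤ (∑ i, |x i| ^ 2) * (∑ i, |y i| ^ 2) :=
    Finset.sum_mul_sq_le_sq_mul_sq Finset.univ _ _
  have h3 : ∑ i, |x i| * |y i| = Real.sqrt ((∑ i, |x i| * |y i|) ^ 2) :=
    (Real.sqrt_sq (Finset.sum_nonneg fun _ _ => mul_nonneg (abs_nonneg _) (abs_nonneg _))).symm
  rw [h3, vnorm, vnorm, ← Real.sqrt_mul (Finset.sum_nonneg fun _ _ => sq_nonneg _)]
  apply Real.sqrt_le_sqrt
  simpa [sq_abs] using h2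

lemma vnorm_mulVec_le_frob (N : Matrix m k ℝ) (y : k → ℝ) :
    vnorm (N.mulVec y) ≤ frob N * vnorm y := by
  rw [vnorm, frob, vnorm, ← Real.sqrt_mul (x := ∑ i, ∑ j, N i j ^ 2) (Finset.sum_nonneg fun _ _ =>
    Finset.sum_nonneg fun _ _ => sq_nonneg _)]
  apply Real.sqrt_le_sqrt
  have : ∀ i : m, (N.mulVec y i) ^ 2 ≤ (∑ c, N i c ^ 2) * ∑ c, y c ^ 2 := by
    intro i
    rw [Matrix.mulVec, dotProduct]
    exact Finset.sum_mul_sq_le_sq_mul_sq Finset.univ _ _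
  calc ∑ i, (N.mulVec y i) ^ 2 ≤ ∑ i, (∑ c, N i c ^ 2) * ∑ c, y c ^ 2 :=
        Finset.sum_le_sum fun i _ => this i
    _ = (∑ i, ∑ c, N i c ^ 2) * ∑ c, y c ^ 2 := by rw [Finset.sum_mul]

end CS

section DiagBound

variable {n : ℕ}

lemma diag_bound (L' N U' : Matrix (Fin n) (Fin n) ℝ) (i : Fin n) :
    |(L' * N * U') i i| ≤ vnorm (fun a => L' i a) * (frob N * vnorm (fun c => U' c i)) := by
  have h1 : (L' * N * U') i i = ∑ a, L' i a * ((N * U') a i) := by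
    rw [Matrix.mul_assoc, Matrix.mul_apply]
  have h2 : ∀ a, (N * U') a i = N.mulVec (fun c => U' c i) a := by
    intro a; rw [Matrix.mul_apply]; rfl
  rw [h1]
  simp_rw [h2]
  refine (abs_dot_le _ _).trans ?_
  exact mul_le_mul_of_nonneg_left (vnorm_mulVec_le_frob _ _) (vnorm_nonneg _)

end DiagBound

section Probes

variable {n : ℕ} {L U : Matrix (Fin n) (Fin n) ℝ}

lemma mu_ge (hL : IsUnitLowerTri L) (hU : IsUpperTri U) (hUdet : IsUnit U.det)
    (hn : 1 ≤ n) (i : Fin n) :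
    vnorm (fun a => L⁻¹ i a) ≤ spec (YU L U) := by
  have hLinv := hL.inv
  have hUinv := hU.inv hUdet
  set b : Fin n := ⟨n-1, by omega⟩ with hb
  set v : Fin n → ℝ := fun a => L⁻¹ i a with hv
  set M : Matrix (Fin n) (Fin n) ℝ := Matrix.of (fun r c => if c = b then v r else 0) with hM
  set S : Fin n → ℝ := fun r => ∑ k, L⁻¹ r k * v k with hS
  have hX : ∀ r d, (L⁻¹ * M * U⁻¹) r d = S r * U⁻¹ b d := by
    intro r d
    rw [Matrix.mul_apply]
    have hLM : ∀ c, (L⁻¹ * M) r c = if c = b then S r else 0 := by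
      intro c
      rw [Matrix.mul_apply]
      by_cases hc : c = b
      · subst hc
        rw [if_pos rfl]
        apply Finset.sum_congr rfl
        intro k _
        simp [hM]
      · rw [if_neg hc]
        apply Finset.sum_eq_zero
        intro k _
        simp [hM, hc]
    simp_rw [hLM, ite_mul, zero_mul]
    rw [Finset.sum_ite_eq' Finset.univ b (fun c => S r * U⁻¹ c d)]
    simp
  have hentry : (ut (L⁻¹ * M * U⁻¹) * U) i b = S i := by
    rw [Matrix.mul_apply]
    rw [Finset.sum_eq_single b (fun d _ hd => ?_) (by simp)]
    · have hib : i ≤ b := by rw [Fin.le_def]; simp only [hb]; omega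
      simp only [ut, Matrix.of_apply, if_pos hib, hX]
      have : U⁻¹ b b * U b b = 1 := upper_inv_diag hU hUdet b
      rw [mul_assoc, this, mul_one]
    · have hdb : d < b := by
        rw [Fin.lt_def]
        have := d.isLt
        simp only [hb]
        have hd' : (d : ℕ) ≠ n - 1 := fun h => hd (by simp [hb, Fin.ext_iff, h])
        omega
      have : U⁻¹ b d = 0 := hUinv b d hdb
      simp only [ut, Matrix.of_apply, hX, this, mul_zero, ite_self, zero_mul]
  have hfrobM : frob M = vnorm v := by
    rw [frob, vnorm]
    congr 1
    apply Finset.sum_congr rfl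
    intro r _
    have : ∀ c, (M r c) ^ 2 = if c = b then v r ^ 2 else 0 := by
      intro c
      simp only [hM, Matrix.of_apply]
      by_cases hc : c = b <;> simp [hc]
    simp_rw [this]
    rw [Finset.sum_ite_eq' Finset.univ b (fun _ => v r ^ 2)]
    simp
  have hSi : S i = vnorm v ^ 2 := by
    rw [hS, sq_vnorm]
    simp [hv, sq]
  have hbound : |S i| ≤ spec (YU L U) * vnorm v := by
    rw [← hentry, ← hfrobM]
    exact (entry_le_frob _ i b).trans (TU_bound hL hU hUdet M)
  rw [hSi, abs_of_nonneg (sq_nonneg _)] at hbound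
  have hvpos : 0 < vnorm v := by
    have h1 : |v i| ≤ vnorm v := coord_le_vnorm v i
    have : v i = 1 := hLinv.1 i
    rw [this] at h1
    simp at h1
    linarith
  nlinarith

lemma lam_ge (hL : IsUnitLowerTri L) (hU : IsUpperTri U) (hUdet : IsUnit U.det)
    (i : Fin n) (hi : (i : ℕ) < n - 1) :
    vnorm (fun l => U⁻¹ l i) ≤ spec (YL L U) := by
  have hLinv := hL.inv
  have hUinv := hU.inv hUdet
  have hn : 1 ≤ n := le_trans (by omega) (Nat.sub_le n 1)
  set a : Fin n := ⟨n-1, by omega⟩ with ha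
  have hia : i < a := by rw [Fin.lt_def]; simpa [ha] using hi
  set w : Fin n → ℝ := fun l => U⁻¹ l i with hw
  set M : Matrix (Fin n) (Fin n) ℝ := Matrix.of (fun r c => if r = a then w c else 0) with hM
  set t : Fin n → ℝ := fun d => ∑ c, w c * U⁻¹ c d with ht
  have hX : ∀ r d, (L⁻¹ * M * U⁻¹) r d = L⁻¹ r a * t d := by
    intro r d
    rw [Matrix.mul_apply]
    have hLM : ∀ c, (L⁻¹ * M) r c = L⁻¹ r a * w c := by
      intro c
      rw [Matrix.mul_apply]
      have : ∀ k, L⁻¹ r k * M k c = if k = a then L⁻¹ r k * w c else 0 := by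
        intro k
        simp only [hM, Matrix.of_apply]
        by_cases hk : k = a <;> simp [hk]
      simp_rw [this]
      rw [Finset.sum_ite_eq' Finset.univ a (fun k => L⁻¹ r k * w c)]
      simp
    simp_rw [hLM, ht, Finset.mul_sum]
    apply Finset.sum_congr rfl
    intro c _
    ring
  have hentry : (L * slt (L⁻¹ * M * U⁻¹)) a i = t i := by
    rw [Matrix.mul_apply]
    have : ∀ b', L a b' * slt (L⁻¹ * M * U⁻¹) b' i
        = (if i < b' then L a b' * L⁻¹ b' a else 0) * t i := by
      intro b'
      simp only [slt, Matrix.of_apply, hX]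
      by_cases hb' : i < b' <;> simp [hb'] <;> ring
    simp_rw [this]
    rw [← Finset.sum_mul]
    have hsum : ∑ b', (if i < b' then L a b' * L⁻¹ b' a else 0) = 1 := by
      have heq : ∀ b', (if i < b' then L a b' * L⁻¹ b' a else 0) = L a b' * L⁻¹ b' a := by
        intro b'
        by_cases hb' : i < b'
        · rw [if_pos hb']
        · rw [if_neg hb']
          have hba : b' < a := lt_of_le_of_lt (not_lt.mp hb') hia
          rw [hLinv.2 b' a hba, mul_zero]
      simp_rw [heq]
      rw [← Matrix.mul_apply, Matrix.mul_nonsing_inv L hL.isUnitDet, Matrix.one_apply_eq]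
    rw [hsum, one_mul]
  have hfrobM : frob M = vnorm w := by
    rw [frob, vnorm]
    congr 1
    rw [Finset.sum_eq_single a (fun r _ hr => ?_) (by simp)]
    · apply Finset.sum_congr rfl
      intro c _
      simp [hM]
    · apply Finset.sum_eq_zero
      intro c _
      simp [hM, hr]
  have hti : t i = vnorm w ^ 2 := by
    rw [ht, sq_vnorm]
    simp [hw, sq]
  have hbound : |t i| ≤ spec (YL L U) * vnorm w := by
    rw [← hentry, ← hfrobM]
    exact (entry_le_frob _ a i).trans (TL_bound hL hU hUdet M)
  rw [hti, abs_of_nonneg (sq_nonneg _)] at hbound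
  have hwpos : 0 < vnorm w := by
    have h1 : |w i| ≤ vnorm w := coord_le_vnorm w i
    have h2 : U⁻¹ i i * U i i = 1 := upper_inv_diag hU hUdet i
    have h3 : w i ≠ 0 := by
      intro h
      rw [hw] at h
      simp only at h
      rw [h, zero_mul] at h2
      exact zero_ne_one h2
    have := abs_pos.mpr h3
    linarith
  nlinarith

end Probes

section MainCore

attribute [local instance] Matrix.frobeniusSeminormedAddCommGroup
  Matrix.frobeniusNormedAddCommGroup Matrix.frobeniusNormedSpace Matrix.frobeniusNormedRing

lemma TL_sub {n : ℕ} (L U M M' : Matrix (Fin n) (Fin n) ℝ) :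
    L * slt (L⁻¹ * M * U⁻¹) - L * slt (L⁻¹ * M' * U⁻¹) = L * slt (L⁻¹ * (M - M') * U⁻¹) := by
  have h : L⁻¹ * (M - M') * U⁻¹ = L⁻¹ * M * U⁻¹ - L⁻¹ * M' * U⁻¹ := by noncomm_ring
  rw [h, ← slt_sub, Matrix.mul_sub]

lemma TU_sub {n : ℕ} (L U M M' : Matrix (Fin n) (Fin n) ℝ) :
    ut (L⁻¹ * M * U⁻¹) * U - ut (L⁻¹ * M' * U⁻¹) * U = ut (L⁻¹ * (M - M') * U⁻¹) * U := by
  have h : L⁻¹ * (M - M') * U⁻¹ = L⁻¹ * M * U⁻¹ - L⁻¹ * M' * U⁻¹ := by noncomm_ring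
  rw [h, ← ut_sub, Matrix.sub_mul]

set_option maxHeartbeats 1000000 in
lemma core {n : ℕ} (hn : 2 ≤ n) (A L U ΔA : Matrix (Fin n) (Fin n) ℝ)
    (hL : IsUnitLowerTri L) (hU : IsUpperTri U)
    (hUdet : IsUnit U.det) (hUsub : IsUnit (lead U).det)
    (hA : A = L * U)
    (hcond : spec (YL L U) * spec (YU L U) * frob ΔA < 1 / 4) :
    ∃ ΔL ΔU : Matrix (Fin n) (Fin n) ℝ,
      IsStrictLowerTri ΔL ∧ IsUpperTri ΔU ∧
      A + ΔA = (L + ΔL) * (U + ΔU) ∧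
      (∀ ΔL' ΔU' : Matrix (Fin n) (Fin n) ℝ,
        IsStrictLowerTri ΔL' → IsUpperTri ΔU' →
        A + ΔA = (L + ΔL') * (U + ΔU') → ΔL' = ΔL ∧ ΔU' = ΔU) ∧
      frob ΔL ≤ 2 * spec (YL L U) * frob ΔA /
          (1 + Real.sqrt (1 - 4 * spec (YU L U) * spec (YL L U) * frob ΔA)) ∧
      2 * spec (YL L U) * frob ΔA /
          (1 + Real.sqrt (1 - 4 * spec (YU L U) * spec (YL L U) * frob ΔA)) ≤
        2 * spec (YL L U) * frob ΔA := by
  classical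
  have hLinv := hL.inv
  have hUinv := hU.inv hUdet
  have hfn : ∀ X : Matrix (Fin n) (Fin n) ℝ, frob X = ‖X‖ := fun X => frob_eq_norm X
  set lam := spec (YL L U) with hlam
  set mu := spec (YU L U) with hmu
  set δ := frob ΔA with hδ
  have hδ0 : 0 ≤ δ := frob_nonneg _
  have lam_pos : 0 < lam := by
    have h := lam_ge hL hU hUdet (⟨0, by omega⟩ : Fin n) (by simp; omega)
    have h2 : U⁻¹ (⟨0, by omega⟩ : Fin n) (⟨0, by omega⟩ : Fin n) ≠ 0 :=
      left_ne_zero_of_mul_eq_one (upper_inv_diag hU hUdet _)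
    have h3 := (abs_pos.mpr h2).trans_le
      (coord_le_vnorm (fun l => U⁻¹ l ⟨0, by omega⟩) ⟨0, by omega⟩)
    linarith
  have mu_pos : 0 < mu := by
    have h := mu_ge hL hU hUdet (by omega) (⟨0, by omega⟩ : Fin n)
    have h3 := coord_le_vnorm (fun a => L⁻¹ (⟨0, by omega⟩ : Fin n) a) ⟨0, by omega⟩
    have h2 : L⁻¹ (⟨0, by omega⟩ : Fin n) (⟨0, by omega⟩ : Fin n) = 1 := hLinv.1 _
    rw [h2] at h3
    simp only [abs_one] at h3
    linarith
  have hc0 : 0 ≤ lam * mu * δ := mul_nonneg (mul_nonneg lam_pos.le mu_pos.le) hδ0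
  have hc4 : lam * mu * δ < 1/4 := hcond
  have hsnn : (0:ℝ) ≤ 1 - 4 * (lam * mu * δ) := by linarith
  set sq : ℝ := Real.sqrt (1 - 4 * (lam * mu * δ)) with hsq
  have hs_pos : 0 < sq := Real.sqrt_pos.mpr (by linarith)
  have hs_le : sq ≤ 1 := by
    rw [hsq]
    have h := Real.sqrt_le_sqrt (show 1 - 4 * (lam * mu * δ) ≤ 1 by linarith)
    simpa using h
  have hs2 : sq ^ 2 = 1 - 4 * (lam * mu * δ) := Real.sq_sqrt hsnn
  set θ : ℝ := (1 + sq) / 2 with hθ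
  have hθhalf : 1/2 < θ := by rw [hθ]; linarith
  have hθ1 : θ ≤ 1 := by rw [hθ]; linarith
  have hθpos : 0 < θ := by linarith
  have hθc : θ * (1 - θ) = lam * mu * δ := by rw [hθ]; nlinarith [hs2]
  set r : ℝ := δ / θ with hr
  have hr0 : 0 ≤ r := div_nonneg hδ0 hθpos.le
  have hδθr : δ = θ * r := by rw [hr]; field_simp
  have hlmr : lam * mu * r = 1 - θ := by
    have h1 : lam * mu * r = (lam * mu * δ) / θ := by rw [hr]; ring
    rw [h1, ← hθc, mul_comm θ (1 - θ), mul_div_assoc, div_self (ne_of_gt hθpos), mul_one]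
  have hkey : δ + lam * mu * r ^ 2 = r := by
    have h2 : lam * mu * r ^ 2 = (1 - θ) * r := by
      have : lam * mu * r ^ 2 = (lam * mu * r) * r := by ring
      rw [this, hlmr]
    have h3 : θ * r + (1 - θ) * r = r := by ring
    linarith
  -- the contraction map, in scaled variables
  set F : (Matrix (Fin n) (Fin n) ℝ × Matrix (Fin n) (Fin n) ℝ) →
      (Matrix (Fin n) (Fin n) ℝ × Matrix (Fin n) (Fin n) ℝ) := fun x =>
    (lam⁻¹ • (L * slt (L⁻¹ * (ΔA - (lam • x.1) * (mu • x.2)) * U⁻¹)),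
     mu⁻¹ • (ut (L⁻¹ * (ΔA - (lam • x.1) * (mu • x.2)) * U⁻¹) * U)) with hF
  have hF1 : ∀ x, (F x).1
      = lam⁻¹ • (L * slt (L⁻¹ * (ΔA - (lam • x.1) * (mu • x.2)) * U⁻¹)) := fun _ => rfl
  have hF2 : ∀ x, (F x).2
      = mu⁻¹ • (ut (L⁻¹ * (ΔA - (lam • x.1) * (mu • x.2)) * U⁻¹) * U) := fun _ => rfl
  set ball : Set (Matrix (Fin n) (Fin n) ℝ × Matrix (Fin n) (Fin n) ℝ) :=
    Metric.closedBall 0 r with hball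
  -- bound on the residual
  have hNbound : ∀ x ∈ ball, ‖ΔA - (lam • x.1) * (mu • x.2)‖ ≤ r := by
    intro x hx
    have hx1 : ‖x.1‖ ≤ r := by
      have := Metric.mem_closedBall.mp hx
      rw [dist_zero_right] at this
      exact (norm_fst_le x).trans this
    have hx2 : ‖x.2‖ ≤ r := by
      have := Metric.mem_closedBall.mp hx
      rw [dist_zero_right] at this
      exact (norm_snd_le x).trans this
    have h1 : ‖ΔA - (lam • x.1) * (mu • x.2)‖ ≤ ‖ΔA‖ + ‖(lam • x.1) * (mu • x.2)‖ :=
      norm_sub_le _ _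
    have h2 : ‖(lam • x.1) * (mu • x.2)‖ ≤ ‖lam • x.1‖ * ‖mu • x.2‖ := norm_mul_le _ _
    have h3 : ‖lam • x.1‖ = lam * ‖x.1‖ := by
      rw [norm_smul, Real.norm_eq_abs, abs_of_pos lam_pos]
    have h4 : ‖mu • x.2‖ = mu * ‖x.2‖ := by
      rw [norm_smul, Real.norm_eq_abs, abs_of_pos mu_pos]
    have h5 : ‖lam • x.1‖ * ‖mu • x.2‖ ≤ (lam * r) * (mu * r) := by
      rw [h3, h4]
      apply mul_le_mul
      · exact mul_le_mul_of_nonneg_left hx1 lam_pos.le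
      · exact mul_le_mul_of_nonneg_left hx2 mu_pos.le
      · exact mul_nonneg mu_pos.le (norm_nonneg _)
      · exact mul_nonneg lam_pos.le hr0
    have h6 : ‖ΔA‖ = δ := (hfn ΔA).symm
    have : (lam * r) * (mu * r) = lam * mu * r ^ 2 := by ring
    rw [this] at h5
    linarith
  have hmaps : Set.MapsTo F ball ball := by
    intro x hx
    have hN := hNbound x hx
    rw [hball, Metric.mem_closedBall, dist_zero_right, Prod.norm_def]
    have hb1 : ‖(F x).1‖ ≤ r := by
      rw [hF1]
      rw [norm_smul, Real.norm_eq_abs, abs_of_pos (inv_pos.mpr lam_pos)]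
      rw [inv_mul_le_iff₀ lam_pos]
      calc ‖L * slt (L⁻¹ * (ΔA - (lam • x.1) * (mu • x.2)) * U⁻¹)‖
          = frob (L * slt (L⁻¹ * (ΔA - (lam • x.1) * (mu • x.2)) * U⁻¹)) := (hfn _).symm
        _ ≤ lam * frob (ΔA - (lam • x.1) * (mu • x.2)) := TL_bound hL hU hUdet _
        _ = lam * ‖ΔA - (lam • x.1) * (mu • x.2)‖ := by rw [hfn]
        _ ≤ lam * r := mul_le_mul_of_nonneg_left hN lam_pos.le
    have hb2 : ‖(F x).2‖ ≤ r := by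
      rw [hF2]
      rw [norm_smul, Real.norm_eq_abs, abs_of_pos (inv_pos.mpr mu_pos)]
      rw [inv_mul_le_iff₀ mu_pos]
      calc ‖ut (L⁻¹ * (ΔA - (lam • x.1) * (mu • x.2)) * U⁻¹) * U‖
          = frob (ut (L⁻¹ * (ΔA - (lam • x.1) * (mu • x.2)) * U⁻¹) * U) := (hfn _).symm
        _ ≤ mu * frob (ΔA - (lam • x.1) * (mu • x.2)) := TU_bound hL hU hUdet _
        _ = mu * ‖ΔA - (lam • x.1) * (mu • x.2)‖ := by rw [hfn]
        _ ≤ mu * r := mul_le_mul_of_nonneg_left hN mu_pos.le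
    exact max_le hb1 hb2
  -- Lipschitz estimate on the ball
  have hlip : ∀ x ∈ ball, ∀ y ∈ ball,
      dist (F x) (F y) ≤ (2 * (1 - θ)) * dist x y := by
    intro x hx y hy
    have hx1 : ‖x.1‖ ≤ r := by
      have := Metric.mem_closedBall.mp hx; rw [dist_zero_right] at this
      exact (norm_fst_le x).trans this
    have hy2 : ‖y.2‖ ≤ r := by
      have := Metric.mem_closedBall.mp hy; rw [dist_zero_right] at this
      exact (norm_snd_le y).trans this
    set Nx := ΔA - (lam • x.1) * (mu • x.2) with hNx
    set Ny := ΔA - (lam • y.1) * (mu • y.2) with hNy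
    have hdiff : Ny - Nx = (lam • x.1) * (mu • x.2 - mu • y.2) + (lam • x.1 - lam • y.1) * (mu • y.2) := by
      have hgen : ∀ P Q R S : Matrix (Fin n) (Fin n) ℝ,
          (ΔA - R * S) - (ΔA - P * Q) = P * (Q - S) + (P - R) * S := by
        intro P Q R S
        noncomm_ring
      rw [hNx, hNy]
      exact hgen _ _ _ _
    have hdnorm : ‖Nx - Ny‖ ≤ (2 * (1 - θ)) * dist x y := by
      rw [norm_sub_rev, hdiff]
      have e1 : ‖(lam • x.1) * (mu • x.2 - mu • y.2)‖ ≤ (lam * r) * (mu * dist x.2 y.2) := by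
        refine (norm_mul_le _ _).trans ?_
        apply mul_le_mul
        · rw [norm_smul, Real.norm_eq_abs, abs_of_pos lam_pos]
          exact mul_le_mul_of_nonneg_left hx1 lam_pos.le
        · rw [← smul_sub, norm_smul, Real.norm_eq_abs, abs_of_pos mu_pos, dist_eq_norm]
        · exact norm_nonneg _
        · exact mul_nonneg lam_pos.le hr0
      have e2 : ‖(lam • x.1 - lam • y.1) * (mu • y.2)‖ ≤ (lam * dist x.1 y.1) * (mu * r) := by
        refine (norm_mul_le _ _).trans ?_
        apply mul_le_mul
        · rw [← smul_sub, norm_smul, Real.norm_eq_abs, abs_of_pos lam_pos, dist_eq_norm]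
        · rw [norm_smul, Real.norm_eq_abs, abs_of_pos mu_pos]
          exact mul_le_mul_of_nonneg_left hy2 mu_pos.le
        · exact norm_nonneg _
        · exact mul_nonneg lam_pos.le dist_nonneg
      have e3 : dist x.1 y.1 ≤ dist x y := by rw [Prod.dist_eq]; exact le_max_left _ _
      have e4 : dist x.2 y.2 ≤ dist x y := by rw [Prod.dist_eq]; exact le_max_right _ _
      have e5 : ‖(lam • x.1) * (mu • x.2 - mu • y.2) + (lam • x.1 - lam • y.1) * (mu • y.2)‖
          ≤ (lam * r) * (mu * dist x.2 y.2) + (lam * dist x.1 y.1) * (mu * r) :=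
        (norm_add_le _ _).trans (add_le_add e1 e2)
      have e6 : (lam * r) * (mu * dist x.2 y.2) + (lam * dist x.1 y.1) * (mu * r)
          ≤ (lam * mu * r) * dist x y + (lam * mu * r) * dist x y := by
        have d0 : 0 ≤ dist x y := dist_nonneg
        have t1 : (lam * r) * (mu * dist x.2 y.2) ≤ (lam * mu * r) * dist x y := by
          have : (lam * r) * (mu * dist x.2 y.2) = (lam * mu * r) * dist x.2 y.2 := by ring
          rw [this]
          exact mul_le_mul_of_nonneg_left e4 (mul_nonneg (mul_nonneg lam_pos.le mu_pos.le) hr0)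
        have t2 : (lam * dist x.1 y.1) * (mu * r) ≤ (lam * mu * r) * dist x y := by
          have : (lam * dist x.1 y.1) * (mu * r) = (lam * mu * r) * dist x.1 y.1 := by ring
          rw [this]
          exact mul_le_mul_of_nonneg_left e3 (mul_nonneg (mul_nonneg lam_pos.le mu_pos.le) hr0)
        linarith
      have : (lam * mu * r) * dist x y + (lam * mu * r) * dist x y
          = (2 * (1 - θ)) * dist x y := by rw [hlmr]; ring
      linarith
    rw [Prod.dist_eq]
    apply max_le
    · rw [dist_eq_norm]
      have hc1 : (F x).1 - (F y).1 = lam⁻¹ • (L * slt (L⁻¹ * (Nx - Ny) * U⁻¹)) := by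
        rw [hF1, hF1, ← hNx, ← hNy, ← smul_sub, TL_sub]
      rw [hc1, norm_smul, Real.norm_eq_abs, abs_of_pos (inv_pos.mpr lam_pos),
        inv_mul_le_iff₀ lam_pos]
      calc ‖L * slt (L⁻¹ * (Nx - Ny) * U⁻¹)‖
          = frob (L * slt (L⁻¹ * (Nx - Ny) * U⁻¹)) := (hfn _).symm
        _ ≤ lam * frob (Nx - Ny) := TL_bound hL hU hUdet _
        _ = lam * ‖Nx - Ny‖ := by rw [hfn]
        _ ≤ lam * ((2 * (1 - θ)) * dist x y) := mul_le_mul_of_nonneg_left hdnorm lam_pos.le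
        _ = lam * (2 * (1 - θ) * dist x y) := by ring
    · rw [dist_eq_norm]
      have hc2 : (F x).2 - (F y).2 = mu⁻¹ • (ut (L⁻¹ * (Nx - Ny) * U⁻¹) * U) := by
        rw [hF2, hF2, ← hNx, ← hNy, ← smul_sub, TU_sub]
      rw [hc2, norm_smul, Real.norm_eq_abs, abs_of_pos (inv_pos.mpr mu_pos),
        inv_mul_le_iff₀ mu_pos]
      calc ‖ut (L⁻¹ * (Nx - Ny) * U⁻¹) * U‖
          = frob (ut (L⁻¹ * (Nx - Ny) * U⁻¹) * U) := (hfn _).symm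
        _ ≤ mu * frob (Nx - Ny) := TU_bound hL hU hUdet _
        _ = mu * ‖Nx - Ny‖ := by rw [hfn]
        _ ≤ mu * ((2 * (1 - θ)) * dist x y) := mul_le_mul_of_nonneg_left hdnorm mu_pos.le
        _ = mu * (2 * (1 - θ) * dist x y) := by ring
  -- set up the contraction
  have hK0 : (0:ℝ) ≤ 2 * (1 - θ) := by linarith
  have hK1 : 2 * (1 - θ) < 1 := by linarith
  set Knn : NNReal := ⟨2 * (1 - θ), hK0⟩ with hKnn
  have hsc : IsComplete ball := Metric.isClosed_closedBall.isComplete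
  have hcontr : ContractingWith Knn (hmaps.restrict F ball ball) := by
    constructor
    · rw [← NNReal.coe_lt_coe]
      exact hK1
    · apply LipschitzWith.of_dist_le_mul
      intro x y
      rw [Subtype.dist_eq, Subtype.dist_eq]
      exact hlip x.1 x.2 y.1 y.2
  have hx0 : (0 : Matrix (Fin n) (Fin n) ℝ × Matrix (Fin n) (Fin n) ℝ) ∈ ball :=
    Metric.mem_closedBall_self hr0
  have hed : edist (0 : Matrix (Fin n) (Fin n) ℝ × Matrix (Fin n) (Fin n) ℝ) (F 0) ≠ ⊤ :=
    edist_ne_top _ _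
  set fp := ContractingWith.efixedPoint' F hsc hmaps hcontr 0 hx0 hed with hfp
  have hfp_mem : fp ∈ ball := ContractingWith.efixedPoint_mem' hsc hmaps hcontr hx0 hed
  have hfp_fix : F fp = fp := ContractingWith.efixedPoint_isFixedPt' hsc hmaps hcontr hx0 hed
  -- extract the solution
  set Z := lam • fp.1 with hZ
  set W := mu • fp.2 with hW
  set Gm := L⁻¹ * (ΔA - Z * W) * U⁻¹ with hGm
  have hZeq : Z = L * slt Gm := by
    have h1 : (F fp).1 = fp.1 := by rw [hfp_fix]
    rw [hF1 fp, ← hZ, ← hW, ← hGm] at h1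
    rw [hZ]
    conv_lhs => rw [← h1]
    rw [smul_smul, mul_inv_cancel₀ (ne_of_gt lam_pos), one_smul]
  have hWeq : W = ut Gm * U := by
    have h1 : (F fp).2 = fp.2 := by rw [hfp_fix]
    rw [hF2 fp, ← hZ, ← hW, ← hGm] at h1
    rw [hW]
    conv_lhs => rw [← h1]
    rw [smul_smul, mul_inv_cancel₀ (ne_of_gt mu_pos), one_smul]
  have hZnorm : ‖Z‖ ≤ lam * r := by
    rw [hZ, norm_smul, Real.norm_eq_abs, abs_of_pos lam_pos]
    have h1 : ‖fp.1‖ ≤ r := by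
      have := Metric.mem_closedBall.mp hfp_mem; rw [dist_zero_right] at this
      exact (norm_fst_le fp).trans this
    exact mul_le_mul_of_nonneg_left h1 lam_pos.le
  have hWnorm : ‖W‖ ≤ mu * r := by
    rw [hW, norm_smul, Real.norm_eq_abs, abs_of_pos mu_pos]
    have h1 : ‖fp.2‖ ≤ r := by
      have := Metric.mem_closedBall.mp hfp_mem; rw [dist_zero_right] at this
      exact (norm_snd_le fp).trans this
    exact mul_le_mul_of_nonneg_left h1 mu_pos.le
  have hNfr : frob (ΔA - Z * W) ≤ r := by
    rw [hfn]
    have := hNbound fp hfp_mem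
    rw [← hZ, ← hW] at this
    exact this
  -- structure of the solution
  have hZs : IsStrictLowerTri Z := by
    rw [hZeq]
    exact lower_mul_strictLower hL.2 (isStrictLower_slt _)
  have hWu : IsUpperTri W := by
    rw [hWeq]
    exact upper_mul_upper (isUpper_ut _) hU
  -- the factorization
  have hGLU : L * Gm * U = ΔA - Z * W := by
    rw [hGm]
    have h1 : L * (L⁻¹ * (ΔA - Z * W) * U⁻¹) * U
        = (L * L⁻¹) * (ΔA - Z * W) * (U⁻¹ * U) := by noncomm_ring
    rw [h1, Matrix.mul_nonsing_inv L hL.isUnitDet, Matrix.nonsing_inv_mul U hUdet,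
      Matrix.one_mul, Matrix.mul_one]
  have hfact : A + ΔA = (L + Z) * (U + W) := by
    have h1 : Z * U + L * W = ΔA - Z * W := by
      conv_lhs => rw [hZeq, hWeq]
      have h2 : L * slt Gm * U + L * (ut Gm * U)
          = L * (slt Gm + ut Gm) * U := by
        noncomm_ring
      rw [h2, slt_add_ut, hGLU]
    have h3 : (L + Z) * (U + W) = L * U + (Z * U + L * W) + Z * W := by noncomm_ring
    rw [h3, h1, hA]
    noncomm_ring
  -- nonvanishing of the relevant diagonal entries of U + W
  have hdiag : ∀ j : Fin n, (j : ℕ) < n - 1 → (U + W) j j ≠ 0 := by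
    intro j hj
    have hWjj : W j j = Gm j j * U j j := by
      rw [hWeq, Matrix.mul_apply]
      rw [Finset.sum_eq_single j (fun k _ hk => ?_) (by simp)]
      · simp [ut]
      · rcases lt_or_gt_of_ne hk with h | h
        · rw [(isUpper_ut Gm) j k h, zero_mul]
        · rw [hU k j h, mul_zero]
    have hGjj : |Gm j j| < 1 := by
      have h1 := diag_bound L⁻¹ (ΔA - Z * W) U⁻¹ j
      rw [← hGm] at h1
      have h2 : vnorm (fun a => L⁻¹ j a) ≤ mu := mu_ge hL hU hUdet (by omega) j
      have h3 : vnorm (fun c => U⁻¹ c j) ≤ lam := lam_ge hL hU hUdet j hj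
      have h4 : vnorm (fun a => L⁻¹ j a) * (frob (ΔA - Z * W) * vnorm (fun c => U⁻¹ c j))
          ≤ mu * (r * lam) := by
        apply mul_le_mul h2 ?_ (mul_nonneg (frob_nonneg _) (vnorm_nonneg _)) mu_pos.le
        exact mul_le_mul hNfr h3 (vnorm_nonneg _) hr0
      have h5 : mu * (r * lam) = lam * mu * r := by ring
      have : |Gm j j| ≤ 1 - θ := by
        rw [← hlmr, ← h5]
        exact h1.trans h4
      linarith
    have hsum : (U + W) j j = (1 + Gm j j) * U j j := by
      rw [Matrix.add_apply, hWjj]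
      ring
    rw [hsum]
    apply mul_ne_zero
    · have := (abs_lt.mp hGjj).1
      linarith
    · exact upper_diag_ne_zero hU hUdet j
  -- uniqueness
  have huniq : ∀ ΔL' ΔU' : Matrix (Fin n) (Fin n) ℝ,
      IsStrictLowerTri ΔL' → IsUpperTri ΔU' →
      A + ΔA = (L + ΔL') * (U + ΔU') → ΔL' = Z ∧ ΔU' = W := by
    intro ΔL' ΔU' hL' hU' heq
    have hL1 : IsUnitLowerTri (L + Z) :=
      ⟨fun i => by rw [Matrix.add_apply, hL.1, hZs i i le_rfl, add_zero],
       fun i j hij => by rw [Matrix.add_apply, hL.2 i j hij, hZs i j hij.le, add_zero]⟩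
    have hL2 : IsUnitLowerTri (L + ΔL') :=
      ⟨fun i => by rw [Matrix.add_apply, hL.1, hL' i i le_rfl, add_zero],
       fun i j hij => by rw [Matrix.add_apply, hL.2 i j hij, hL' i j hij.le, add_zero]⟩
    have hUW : IsUpperTri (U + W) := fun i j h => by
      rw [Matrix.add_apply, hU i j h, hWu i j h, add_zero]
    have hUU' : IsUpperTri (U + ΔU') := fun i j h => by
      rw [Matrix.add_apply, hU i j h, hU' i j h, add_zero]
    have h12 : (L + ΔL') * (U + ΔU') = (L + Z) * (U + W) := by rw [← heq, hfact]
    set P := (L + ΔL')⁻¹ * (L + Z) with hP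
    have hPunit : IsUnitLowerTri P := unitLower_mul_unitLower hL2.inv hL1
    have hPU : P * (U + W) = U + ΔU' := by
      rw [hP, Matrix.mul_assoc, ← h12, ← Matrix.mul_assoc,
        Matrix.nonsing_inv_mul _ hL2.isUnitDet, Matrix.one_mul]
    have hPz : ∀ m : ℕ, ∀ j i : Fin n, (j : ℕ) = m → j < i → P i j = 0 := by
      intro m
      induction m using Nat.strong_induction_on with
      | _ m ih =>
        intro j i hjm hji
        have h0 : (P * (U + W)) i j = 0 := by
          rw [hPU]
          exact hUU' i j hji
        rw [Matrix.mul_apply] at h0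
        have hsum : ∑ k, P i k * (U + W) k j = P i j * (U + W) j j := by
          apply Finset.sum_eq_single j ?_ (by simp)
          intro k _ hk
          rcases lt_or_gt_of_ne hk with h | h
          · rw [ih (k : ℕ) (by rw [← hjm]; exact Fin.lt_def.mp h) k i rfl (h.trans hji),
              zero_mul]
          · rw [hUW k j h, mul_zero]
        rw [hsum] at h0
        have hjj : (U + W) j j ≠ 0 := by
          apply hdiag j
          have := Fin.lt_def.mp hji
          have := i.isLt
          omega
        exact (mul_eq_zero.mp h0).resolve_right hjj
    have hP1 : P = 1 := by
      ext i j
      rcases lt_trichotomy i j with h | h | h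
      · rw [hPunit.2 i j h, Matrix.one_apply_ne (ne_of_lt h)]
      · rw [h, hPunit.1, Matrix.one_apply_eq]
      · rw [hPz (j : ℕ) j i rfl h, Matrix.one_apply_ne (ne_of_gt h)]
    have hLeq : L + Z = L + ΔL' := by
      have h1 : (L + ΔL') * P = L + Z := by
        rw [hP, ← Matrix.mul_assoc, Matrix.mul_nonsing_inv _ hL2.isUnitDet, Matrix.one_mul]
      rw [hP1, Matrix.mul_one] at h1
      exact h1.symm
    constructor
    · have := add_left_cancel hLeq.symm
      exact this
    · have h2 := hPU
      rw [hP1, Matrix.one_mul] at h2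
      exact (add_left_cancel h2.symm)
  -- assemble
  refine ⟨Z, W, hZs, hWu, hfact, huniq, ?_, ?_⟩
  · have hgoal : 2 * lam * δ / (1 + Real.sqrt (1 - 4 * mu * lam * δ)) = lam * r := by
      have h1 : 1 - 4 * mu * lam * δ = 1 - 4 * (lam * mu * δ) := by ring
      rw [h1, ← hsq, hr, hθ]
      have h2 : 1 + sq ≠ 0 := by linarith
      field_simp
    rw [hgoal, hfn]
    exact hZnorm
  · apply div_le_self (mul_nonneg (mul_nonneg (by norm_num) (spec_nonneg _)) (frob_nonneg _))
    have := Real.sqrt_nonneg (1 - 4 * mu * lam * δ)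
    linarith

end MainCore

theorem stmt0 {n : ℕ} (A L U ΔA : Matrix (Fin n) (Fin n) ℝ)
    (hL : IsUnitLowerTri L) (hU : IsUpperTri U)
    (hUdet : IsUnit U.det) (hUsub : IsUnit (lead U).det)
    (hA : A = L * U)
    (hcond : spec (YL L U) * spec (YU L U) * frob ΔA < 1 / 4) :
    ∃ ΔL ΔU : Matrix (Fin n) (Fin n) ℝ,
      IsStrictLowerTri ΔL ∧ IsUpperTri ΔU ∧
      A + ΔA = (L + ΔL) * (U + ΔU) ∧
      (∀ ΔL' ΔU' : Matrix (Fin n) (Fin n) ℝ,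
        IsStrictLowerTri ΔL' → IsUpperTri ΔU' →
        A + ΔA = (L + ΔL') * (U + ΔU') → ΔL' = ΔL ∧ ΔU' = ΔU) ∧
      frob ΔL ≤ 2 * spec (YL L U) * frob ΔA /
          (1 + Real.sqrt (1 - 4 * spec (YU L U) * spec (YL L U) * frob ΔA)) ∧
      2 * spec (YL L U) * frob ΔA /
          (1 + Real.sqrt (1 - 4 * spec (YU L U) * spec (YL L U) * frob ΔA)) ≤
        2 * spec (YL L U) * frob ΔA := by
  have hnum : 0 ≤ 2 * spec (YL L U) * frob ΔA :=
    mul_nonneg (mul_nonneg (by norm_num) (spec_nonneg _)) (frob_nonneg _)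
  have hden : (1:ℝ) ≤ 1 + Real.sqrt (1 - 4 * spec (YU L U) * spec (YL L U) * frob ΔA) := by
    have := Real.sqrt_nonneg (1 - 4 * spec (YU L U) * spec (YL L U) * frob ΔA)
    linarith
  rcases Nat.lt_or_ge n 2 with hn | hn
  · interval_cases n
    · -- n = 0
      refine ⟨0, 0, fun i _ _ => i.elim0, fun i _ _ => i.elim0, ?_, ?_, ?_, ?_⟩
      · ext i j; exact i.elim0
      · intro ΔL' ΔU' _ _ _
        constructor <;> (ext i j; exact i.elim0)
      · have h0 : frob (0 : Matrix (Fin 0) (Fin 0) ℝ) = 0 := by simp [frob]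
        rw [h0]
        apply div_nonneg hnum
        linarith
      · exact div_le_self hnum hden
    · -- n = 1
      have hL1 : L = 1 := by
        ext i j
        have hji : j = i := Subsingleton.elim j i
        subst hji
        rw [hL.1, Matrix.one_apply_eq]
      have hAU : A = U := by rw [hA, hL1, Matrix.one_mul]
      refine ⟨0, ΔA, fun i j _ => by simp, ?_, ?_, ?_, ?_, ?_⟩
      · intro i j h
        rw [Subsingleton.elim j i] at h
        exact absurd h (lt_irrefl i)
      · rw [add_zero, hL1, Matrix.one_mul, hAU]
      · intro ΔL' ΔU' hsl hup heq
        have h1 : ΔL' = 0 := by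
          ext i j
          rw [hsl i j (le_of_eq (Subsingleton.elim i j)), Matrix.zero_apply]
        refine ⟨h1, ?_⟩
        rw [h1, add_zero, hL1, Matrix.one_mul, hAU] at heq
        exact add_left_cancel heq.symm
      · have h0 : frob (0 : Matrix (Fin 1) (Fin 1) ℝ) = 0 := by simp [frob]
        rw [h0]
        apply div_nonneg hnum
        linarith
      · exact div_le_self hnum hden
  · exact core hn A L U ΔA hL hU hUdet hUsub hA hcond
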